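/- Let G be a graph, S ⊆ V(G) such that G contains no induced paw all of whose edges avoid having both endpoints in S (i.e., every induced paw of G has an edge with both endpoints in S). Then every vertex s ∈ S is adjacent to at most one connected component of G - S that is complete multipartite with at least three parts. -/

import Mathlib

open SimpleGraph

/-- The paw: triangle 0,1,2 plus pendant vertex 3 attached at 2. -/
def paw : SimpleGraph (Fin 4) :=
  SimpleGraph.fromEdgeSet {s(0,1), s(0,2), s(1,2), s(2,3)}

/-- `G` contains an induced copy of the paw. -/
def HasInducedPaw {V : Type*} (G : SimpleGraph V) : Prop :=
  ∃ f : Fin 4 ↪ V, ∀ a b : Fin 4, paw.Adj a b ↔ G.Adj (f a) (f b)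

def PawFree {V : Type*} (G : SimpleGraph V) : Prop := ¬ HasInducedPaw G

/-- `G` is complete multipartite with parts given as the fibers of `part`:
two vertices are adjacent iff they lie in different parts. -/
def IsCMWith {V ι : Type*} (G : SimpleGraph V) (part : V → ι) : Prop :=
  ∀ u v : V, G.Adj u v ↔ part u ≠ part v

/-- `G` is complete multipartite. -/
def IsCM {V : Type*} (G : SimpleGraph V) : Prop :=
  ∃ part : V → V, IsCMWith G part

/-- `G` is complete multipartite with at least three parts. -/
def IsCM3 {V : Type*} (G : SimpleGraph V) : Prop :=
  ∃ part : V → V, IsCMWith G part ∧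
    ∃ u v w : V, part u ≠ part v ∧ part u ≠ part w ∧ part v ≠ part w

/-- The graph `G Δ A`: edge set is the symmetric difference of `E(G)` and `A`. -/
def edit {V : Type*} (G : SimpleGraph V) (A : Finset (Sym2 V)) : SimpleGraph V :=
  SimpleGraph.fromEdgeSet (symmDiff G.edgeSet (A : Set (Sym2 V)))

/-- If every induced paw of `G` has an edge with both endpoints in `S`, then every
vertex `s ∈ S` is adjacent to at most one connected component of `G - S` that is
complete multipartite with at least three parts. -/
lemma paw_found {V : Type*} (G : SimpleGraph V) (p q r t : V)
    (hpq : G.Adj p q) (hpr : G.Adj p r) (hqr : G.Adj q r) (hrt : G.Adj r t)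
    (hpt : ¬ G.Adj p t) (hqt : ¬ G.Adj q t) :
    ∃ f : Fin 4 ↪ V, (∀ a b : Fin 4, paw.Adj a b ↔ G.Adj (f a) (f b)) ∧
      ∀ i : Fin 4, f i = p ∨ f i = q ∨ f i = r ∨ f i = t := by
  have hp_t : p ≠ t := fun h => hqt (h ▸ hpq.symm)
  have hq_t : q ≠ t := fun h => hpt (h ▸ hpq)
  have hr_t : r ≠ t := hrt.ne
  have htp : ¬ G.Adj t p := fun h => hpt h.symm
  have htq : ¬ G.Adj t q := fun h => hqt h.symm
  refine ⟨⟨![p,q,r,t], ?_⟩, ?_, ?_⟩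
  · intro a b h
    fin_cases a <;> fin_cases b <;>
      simp_all [hpq.ne, hpr.ne, hqr.ne, hpq.ne', hpr.ne', hqr.ne', hp_t, hq_t, hr_t,
        hp_t.symm, hq_t.symm, hr_t.symm]
  · intro a b
    show paw.Adj a b ↔ G.Adj (![p,q,r,t] a) (![p,q,r,t] b)
    fin_cases a <;> fin_cases b <;>
      simp_all [paw, G.irrefl, hpq.symm, hpr.symm, hqr.symm, hrt.symm, hrt]
  · intro i; show ![p,q,r,t] i = p ∨ ![p,q,r,t] i = q ∨ ![p,q,r,t] i = r ∨ ![p,q,r,t] i = t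
    fin_cases i <;> simp

theorem statement_4 {V : Type*} (G : SimpleGraph V) (S : Set V)
    (hS : ∀ f : Fin 4 ↪ V, (∀ a b : Fin 4, paw.Adj a b ↔ G.Adj (f a) (f b)) →
      ∃ a b : Fin 4, paw.Adj a b ∧ f a ∈ S ∧ f b ∈ S)
    (s : V) (hs : s ∈ S)
    (c₁ c₂ : (G.induce Sᶜ).ConnectedComponent)
    (h₁ : IsCM3 ((G.induce Sᶜ).induce c₁.supp))
    (h₂ : IsCM3 ((G.induce Sᶜ).induce c₂.supp))
    (hadj₁ : ∃ v : ↥Sᶜ, v ∈ c₁.supp ∧ G.Adj s ↑v)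
    (hadj₂ : ∃ v : ↥Sᶜ, v ∈ c₂.supp ∧ G.Adj s ↑v) :
    c₁ = c₂ := by
  by_contra hne
  obtain ⟨x, hxc, hsx⟩ := hadj₁
  obtain ⟨y, hyc, hsy⟩ := hadj₂
  obtain ⟨part, hcm, u, v, w, huv, huw, hvw⟩ := h₁
  -- vertices in different components are non-adjacent
  have hdiff : ∀ (a b : ↥Sᶜ), a ∈ c₁.supp → b ∈ c₂.supp → ¬ G.Adj ↑a ↑b := by
    intro a b ha hb hab
    apply hne
    rw [ConnectedComponent.mem_supp_iff] at ha hb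
    rw [← ha, ← hb]
    have hab' : (G.induce Sᶜ).Adj a b := hab
    exact ConnectedComponent.sound hab'.reachable
  have hadjcm : ∀ a b : ↥c₁.supp, part a ≠ part b → G.Adj ↑↑a ↑↑b :=
    fun a b h => (hcm a b).2 h
  set X : ↥c₁.supp := ⟨x, hxc⟩ with hX
  -- pick two vertices in parts different from X's part and from each other
  obtain ⟨v', w', hXv, hXw, hvw'⟩ :
      ∃ v' w' : ↥c₁.supp, part X ≠ part v' ∧ part X ≠ part w' ∧ part v' ≠ part w' := by
    by_cases h1 : part X = part u
    · exact ⟨v, w, h1 ▸ huv, h1 ▸ huw, hvw⟩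
    · by_cases h2 : part X = part v
      · exact ⟨u, w, h1, fun h => hvw (h2.symm.trans h), huw⟩
      · exact ⟨u, v, h1, h2, huv⟩
  have hxS : (↑x : V) ∉ S := x.2
  have hvS : (↑↑v' : V) ∉ S := (v' : ↥Sᶜ).2
  have hwS : (↑↑w' : V) ∉ S := (w' : ↥Sᶜ).2
  have hyS : (↑y : V) ∉ S := y.2
  have hxv : G.Adj ↑x ↑↑v' := hadjcm X v' hXv
  have hxw : G.Adj ↑x ↑↑w' := hadjcm X w' hXw
  have hvw2 : G.Adj ↑↑v' ↑↑w' := hadjcm v' w' hvw'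
  have key : ∃ f : Fin 4 ↪ V, (∀ a b : Fin 4, paw.Adj a b ↔ G.Adj (f a) (f b)) ∧
      ∀ i : Fin 4, f i = s ∨ f i ∉ S := by
    by_cases hsv : G.Adj s ↑↑v'
    · obtain ⟨f, hf, hval⟩ := paw_found G ↑x ↑↑v' s ↑y hxv hsx.symm hsv.symm hsy
        (hdiff x y hxc hyc) (hdiff ↑v' y v'.2 hyc)
      exact ⟨f, hf, fun i => by rcases hval i with h|h|h|h <;> simp [h, hxS, hyS, hvS]⟩
    · by_cases hsw : G.Adj s ↑↑w'
      · obtain ⟨f, hf, hval⟩ := paw_found G ↑x ↑↑w' s ↑y hxw hsx.symm hsw.symm hsy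
          (hdiff x y hxc hyc) (hdiff ↑w' y w'.2 hyc)
        exact ⟨f, hf, fun i => by rcases hval i with h|h|h|h <;> simp [h, hxS, hyS, hwS]⟩
      · obtain ⟨f, hf, hval⟩ := paw_found G ↑↑v' ↑↑w' ↑x s hvw2 hxv.symm hxw.symm hsx.symm
          (fun h => hsv h.symm) (fun h => hsw h.symm)
        exact ⟨f, hf, fun i => by rcases hval i with h|h|h|h <;> simp [h, hxS, hvS, hwS]⟩
  obtain ⟨f, hf, hval⟩ := key
  obtain ⟨a, b, hab, haS, hbS⟩ := hS f hf
  have ha : f a = s := (hval a).resolve_right (fun h => h haS)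
  have hb : f b = s := (hval b).resolve_right (fun h => h hbS)
  exact hab.ne (f.injective (ha.trans hb.symm))
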